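/- Let L_d be an autonomous C¹ 3-point discrete Lagrangian and Δt, Δx > 0. On the torus X = ([0,b₀]/∼) × ([0,b₁]/∼), a C¹ function u: X → ℝ^d is a stationary point of the continuous action S(u) = ∫_X L_d(u(t,x), u(t+Δt, x), u(t, x+Δx)) dx dt with respect to compactly supported variations if and only if it satisfies the functional discrete Euler–Lagrange equation: (∂₁L_d)(u(t,x), u(t+Δt,x), u(t,x+Δx)) + (∂₂L_d)(u(t−Δt,x), u(t,x), u(t−Δt,x+Δx)) + (∂₃L_d)(u(t,x−Δx), u(t+Δt,x−Δx), u(t,x)) = 0 for all (t,x). -/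

import Mathlib

noncomputable section

/-- Continuum action for a 3-point discrete Lagrangian density on the torus:
`S(w) = ∫₀^{b₀}∫₀^{b₁} L_d(w(t,x), w(t+Δt,x), w(t,x+Δx)) dx dt`. -/
def SactD {d : ℕ} (Ld : (Fin d → ℝ) → (Fin d → ℝ) → (Fin d → ℝ) → ℝ)
    (b₀ b₁ Δt Δx : ℝ) (w : ℝ → ℝ → (Fin d → ℝ)) : ℝ :=
  ∫ t in (0:ℝ)..b₀, ∫ x in (0:ℝ)..b₁, Ld (w t x) (w (t + Δt) x) (w t (x + Δx))

set_option maxHeartbeats 3000000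

namespace DELaux
open MeasureTheory intervalIntegral Set Metric Real

variable {d : ℕ}

/-- first-slot inclusion -/
def ι₁ : (Fin d → ℝ) →L[ℝ] (Fin d → ℝ) × (Fin d → ℝ) × (Fin d → ℝ) :=
  (ContinuousLinearMap.id ℝ _).prod 0
def ι₂ : (Fin d → ℝ) →L[ℝ] (Fin d → ℝ) × (Fin d → ℝ) × (Fin d → ℝ) :=
  (0 : _ →L[ℝ] _).prod ((ContinuousLinearMap.id ℝ _).prod 0)
def ι₃ : (Fin d → ℝ) →L[ℝ] (Fin d → ℝ) × (Fin d → ℝ) × (Fin d → ℝ) :=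
  (0 : _ →L[ℝ] _).prod ((0 : _ →L[ℝ] _).prod (ContinuousLinearMap.id ℝ _))

lemma iota_decomp (v : (Fin d → ℝ) × (Fin d → ℝ) × (Fin d → ℝ)) :
    ι₁ v.1 + ι₂ v.2.1 + ι₃ v.2.2 = v := by
  simp [ι₁, ι₂, ι₃, Prod.ext_iff]

section partials
variable {Ld : (Fin d → ℝ) → (Fin d → ℝ) → (Fin d → ℝ) → ℝ}
  (hLd : ContDiff ℝ 1
    (fun q : (Fin d → ℝ) × (Fin d → ℝ) × (Fin d → ℝ) => Ld q.1 q.2.1 q.2.2))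

include hLd

lemma hasFDerivAt_partial1 (x y z : Fin d → ℝ) :
    HasFDerivAt (fun a => Ld a y z) ((fderiv ℝ (fun q : (Fin d → ℝ) × (Fin d → ℝ) × (Fin d → ℝ) => Ld q.1 q.2.1 q.2.2) (x, y, z)).comp ι₁) x := by
  have h : HasFDerivAt (fun a : Fin d → ℝ => ((a, (y, z)) : _)) ι₁ x :=
    (hasFDerivAt_id x).prodMk (hasFDerivAt_const (y, z) x)
  exact ((hLd.differentiable one_ne_zero (x, y, z)).hasFDerivAt).comp x h

lemma hasFDerivAt_partial2 (x y z : Fin d → ℝ) :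
    HasFDerivAt (fun a => Ld x a z) ((fderiv ℝ (fun q : (Fin d → ℝ) × (Fin d → ℝ) × (Fin d → ℝ) => Ld q.1 q.2.1 q.2.2) (x, y, z)).comp ι₂) y := by
  have h : HasFDerivAt (fun a : Fin d → ℝ => ((x, (a, z)) : _)) ι₂ y :=
    (hasFDerivAt_const x y).prodMk ((hasFDerivAt_id y).prodMk (hasFDerivAt_const z y))
  exact ((hLd.differentiable one_ne_zero (x, y, z)).hasFDerivAt).comp y h

lemma hasFDerivAt_partial3 (x y z : Fin d → ℝ) :
    HasFDerivAt (fun a => Ld x y a) ((fderiv ℝ (fun q : (Fin d → ℝ) × (Fin d → ℝ) × (Fin d → ℝ) => Ld q.1 q.2.1 q.2.2) (x, y, z)).comp ι₃) z := by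
  have h : HasFDerivAt (fun a : Fin d → ℝ => ((x, (y, a)) : _)) ι₃ z :=
    (hasFDerivAt_const x z).prodMk ((hasFDerivAt_const y z).prodMk (hasFDerivAt_id z))
  exact ((hLd.differentiable one_ne_zero (x, y, z)).hasFDerivAt).comp z h

lemma fderiv_split (x y z : Fin d → ℝ) (v : (Fin d → ℝ) × (Fin d → ℝ) × (Fin d → ℝ)) :
    fderiv ℝ (fun q : (Fin d → ℝ) × (Fin d → ℝ) × (Fin d → ℝ) => Ld q.1 q.2.1 q.2.2) (x, y, z) v
      = fderiv ℝ (fun a => Ld a y z) x v.1 + fderiv ℝ (fun a => Ld x a z) y v.2.1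
        + fderiv ℝ (fun a => Ld x y a) z v.2.2 := by
  rw [(hasFDerivAt_partial1 hLd x y z).fderiv, (hasFDerivAt_partial2 hLd x y z).fderiv,
    (hasFDerivAt_partial3 hLd x y z).fderiv]
  conv_lhs => rw [← iota_decomp v]
  simp


end partials

lemma integrableOn_box {b₀ b₁ : ℝ} {Φ : ℝ × ℝ → ℝ} (hΦ : Continuous Φ) :
    IntegrableOn Φ (Ioc (0:ℝ) b₀ ×ˢ Ioc (0:ℝ) b₁) := by
  have hK : IsCompact (Icc (0:ℝ) b₀ ×ˢ Icc (0:ℝ) b₁) := isCompact_Icc.prod isCompact_Icc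
  exact (hΦ.continuousOn.integrableOn_compact hK).mono_set
    (Set.prod_mono Ioc_subset_Icc_self Ioc_subset_Icc_self)

lemma box_finite {b₀ b₁ : ℝ} :
    volume (Ioc (0:ℝ) b₀ ×ˢ Ioc (0:ℝ) b₁) < ⊤ := by
  have hK : IsCompact (Icc (0:ℝ) b₀ ×ˢ Icc (0:ℝ) b₁) := isCompact_Icc.prod isCompact_Icc
  exact lt_of_le_of_lt
    (measure_mono (Set.prod_mono Ioc_subset_Icc_self Ioc_subset_Icc_self)) hK.measure_lt_top

lemma double_to_set {b₀ b₁ : ℝ} (hb₀ : 0 ≤ b₀) (hb₁ : 0 ≤ b₁) {Φ : ℝ × ℝ → ℝ}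
    (hΦ : Continuous Φ) :
    (∫ t in (0:ℝ)..b₀, ∫ x in (0:ℝ)..b₁, Φ (t, x))
      = ∫ p in Ioc (0:ℝ) b₀ ×ˢ Ioc (0:ℝ) b₁, Φ p := by
  have hint : IntegrableOn Φ (Ioc (0:ℝ) b₀ ×ˢ Ioc (0:ℝ) b₁) := integrableOn_box hΦ
  rw [intervalIntegral.integral_of_le hb₀]
  simp_rw [intervalIntegral.integral_of_le hb₁]
  rw [Measure.volume_eq_prod] at hint ⊢
  rw [setIntegral_prod _ hint]


lemma deriv_SactD (b₀ b₁ Δt Δx : ℝ) (hb₀ : 0 < b₀) (hb₁ : 0 < b₁)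
    (Ld : (Fin d → ℝ) → (Fin d → ℝ) → (Fin d → ℝ) → ℝ)
    (hLd : ContDiff ℝ 1
      (fun q : (Fin d → ℝ) × (Fin d → ℝ) × (Fin d → ℝ) => Ld q.1 q.2.1 q.2.2))
    (u δ : ℝ → ℝ → (Fin d → ℝ))
    (hu : ContDiff ℝ 1 (fun p : ℝ × ℝ => u p.1 p.2))
    (hδ : ContDiff ℝ 1 (fun p : ℝ × ℝ => δ p.1 p.2)) :
    deriv (fun ε : ℝ => SactD Ld b₀ b₁ Δt Δx (fun t x => u t x + ε • δ t x)) 0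
      = ∫ t in (0:ℝ)..b₀, ∫ x in (0:ℝ)..b₁,
          (fderiv ℝ (fun q : (Fin d → ℝ) × (Fin d → ℝ) × (Fin d → ℝ) => Ld q.1 q.2.1 q.2.2)
              (u t x, u (t + Δt) x, u t (x + Δx)))
            (δ t x, δ (t + Δt) x, δ t (x + Δx)) := by
  set L := fun q : (Fin d → ℝ) × (Fin d → ℝ) × (Fin d → ℝ) => Ld q.1 q.2.1 q.2.2 with hLdef
  set DL := fderiv ℝ L with hDLdef
  have hDL : Continuous DL := hLd.continuous_fderiv one_ne_zero
  have hLc : Continuous L := hLd.continuous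
  have hLdiff : Differentiable ℝ L := hLd.differentiable one_ne_zero
  have hucont : Continuous fun p : ℝ × ℝ => u p.1 p.2 := hu.continuous
  have hδcont : Continuous fun p : ℝ × ℝ => δ p.1 p.2 := hδ.continuous
  set P : ℝ × ℝ → (Fin d → ℝ) × (Fin d → ℝ) × (Fin d → ℝ) :=
    fun p => (u p.1 p.2, u (p.1 + Δt) p.2, u p.1 (p.2 + Δx)) with hPdef
  set Q : ℝ × ℝ → (Fin d → ℝ) × (Fin d → ℝ) × (Fin d → ℝ) :=
    fun p => (δ p.1 p.2, δ (p.1 + Δt) p.2, δ p.1 (p.2 + Δx)) with hQdef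
  have shift1 : Continuous fun p : ℝ × ℝ => ((p.1 + Δt, p.2) : ℝ × ℝ) :=
    (continuous_fst.add continuous_const).prodMk continuous_snd
  have shift2 : Continuous fun p : ℝ × ℝ => ((p.1, p.2 + Δx) : ℝ × ℝ) :=
    continuous_fst.prodMk (continuous_snd.add continuous_const)
  have hP : Continuous P :=
    hucont.prodMk ((hucont.comp shift1).prodMk (hucont.comp shift2))
  have hQ : Continuous Q :=
    hδcont.prodMk ((hδcont.comp shift1).prodMk (hδcont.comp shift2))
  set s := Ioc (0:ℝ) b₀ ×ˢ Ioc (0:ℝ) b₁ with hsdef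
  set μ := volume.restrict s with hμdef
  set F : ℝ → ℝ × ℝ → ℝ := fun ε p => L (P p + ε • Q p) with hFdef
  set F' : ℝ → ℝ × ℝ → ℝ := fun ε p => DL (P p + ε • Q p) (Q p) with hF'def
  have hFc : ∀ ε, Continuous (F ε) := fun ε =>
    hLc.comp (hP.add (hQ.const_smul ε))
  have hF'c : ∀ ε, Continuous (F' ε) := fun ε =>
    ((hDL.comp (hP.add (hQ.const_smul ε))).clm_apply hQ)
  -- bounds
  have hK : IsCompact (Icc (0:ℝ) b₀ ×ˢ Icc (0:ℝ) b₁) := isCompact_Icc.prod isCompact_Icc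
  obtain ⟨M₁, hM₁⟩ := hK.exists_bound_of_continuousOn hP.continuousOn
  obtain ⟨M₂, hM₂⟩ := hK.exists_bound_of_continuousOn hQ.continuousOn
  set M := max M₁ 0 + max M₂ 0 with hMdef
  have hMQ : ∀ p ∈ s, ‖Q p‖ ≤ max M₂ 0 := fun p hp =>
    le_trans (hM₂ p (Set.prod_mono Ioc_subset_Icc_self Ioc_subset_Icc_self hp)) (le_max_left _ _)
  have hball : IsCompact (closedBall (0 : (Fin d → ℝ) × (Fin d → ℝ) × (Fin d → ℝ)) M) :=
    isCompact_closedBall _ _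
  obtain ⟨C, hC⟩ := hball.exists_bound_of_continuousOn hDL.continuousOn
  have key : ∀ p ∈ s, ∀ ε ∈ ball (0:ℝ) 1, ‖F' ε p‖ ≤ max C 0 * max M₂ 0 := by
    intro p hp ε hε
    have hps : p ∈ Icc (0:ℝ) b₀ ×ˢ Icc (0:ℝ) b₁ :=
      Set.prod_mono Ioc_subset_Icc_self Ioc_subset_Icc_self hp
    have harg : P p + ε • Q p ∈ closedBall (0 : (Fin d → ℝ) × (Fin d → ℝ) × (Fin d → ℝ)) M := by
      rw [mem_closedBall_zero_iff]
      calc ‖P p + ε • Q p‖ ≤ ‖P p‖ + ‖ε • Q p‖ := norm_add_le _ _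
        _ ≤ max M₁ 0 + max M₂ 0 := by
            refine add_le_add (le_trans (hM₁ p hps) (le_max_left _ _)) ?_
            rw [norm_smul]
            have : ‖ε‖ ≤ 1 := by
              simpa [Real.norm_eq_abs] using le_of_lt (mem_ball_zero_iff.mp hε)
            calc ‖ε‖ * ‖Q p‖ ≤ 1 * ‖Q p‖ :=
                  mul_le_mul_of_nonneg_right this (norm_nonneg _)
              _ = ‖Q p‖ := one_mul _
              _ ≤ max M₂ 0 := hMQ p hp
    calc ‖F' ε p‖ ≤ ‖DL (P p + ε • Q p)‖ * ‖Q p‖ := (DL _).le_opNorm _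
      _ ≤ max C 0 * max M₂ 0 :=
          mul_le_mul (le_trans (hC _ harg) (le_max_left _ _)) (hMQ p hp) (norm_nonneg _)
            (le_max_right _ _)
  -- differentiability in ε
  have hdiff : ∀ (p : ℝ × ℝ) (ε : ℝ), HasDerivAt (fun e => F e p) (F' ε p) ε := by
    intro p ε
    have h1 : HasDerivAt (fun e : ℝ => P p + e • Q p) (Q p) ε := by
      simpa using ((hasDerivAt_id ε).smul_const (Q p)).const_add (P p)
    exact ((hLdiff (P p + ε • Q p)).hasFDerivAt).comp_hasDerivAt ε h1
  -- apply dominated differentiation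
  have hμfin : μ s < ⊤ := by
    rw [hμdef, Measure.restrict_apply_self]
    exact lt_of_le_of_lt
      (measure_mono (Set.prod_mono Ioc_subset_Icc_self Ioc_subset_Icc_self)) hK.measure_lt_top
  have hboundint : Integrable (fun _ : ℝ × ℝ => max C 0 * max M₂ 0) μ := by
    rw [hμdef]
    exact (integrableOn_const_iff enorm_ne_top).2 (Or.inr (lt_of_le_of_lt
      (measure_mono (Set.prod_mono Ioc_subset_Icc_self Ioc_subset_Icc_self)) hK.measure_lt_top))
  have hint0 : Integrable (F 0) μ := integrableOn_box (hFc 0)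
  have hae : ∀ᵐ p ∂μ, p ∈ s := ae_restrict_mem (measurableSet_Ioc.prod measurableSet_Ioc)
  have main := hasDerivAt_integral_of_dominated_loc_of_deriv_le (μ := μ)
    (F := F) (F' := F') (x₀ := (0:ℝ)) (bound := fun _ => max C 0 * max M₂ 0)
    (ball_mem_nhds 0 one_pos)
    (Filter.Eventually.of_forall fun ε => (hFc ε).aestronglyMeasurable)
    hint0 ((hF'c 0).aestronglyMeasurable)
    (hae.mono fun p hp ε hε => key p hp ε hε)
    hboundint
    (hae.mono fun p _ ε _ => hdiff p ε)
  have hSact : (fun ε : ℝ => SactD Ld b₀ b₁ Δt Δx (fun t x => u t x + ε • δ t x))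
      = fun ε => ∫ p, F ε p ∂μ := by
    funext ε
    rw [hμdef]
    exact double_to_set hb₀.le hb₁.le (hFc ε)
  rw [hSact, main.2.deriv]
  have : (F' 0) = fun p => DL (P p) (Q p) := by
    funext p; simp [hF'def]
  rw [this]
  exact (double_to_set hb₀.le hb₁.le ((hDL.comp hP).clm_apply hQ)).symm


lemma shift_outer {b c : ℝ} {K : ℝ → ℝ} (hK : Function.Periodic K b) :
    (∫ t in (0:ℝ)..b, K (t + c)) = ∫ t in (0:ℝ)..b, K t := by
  rw [intervalIntegral.integral_comp_add_right]
  have h := hK.intervalIntegral_add_eq c 0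
  simpa [zero_add, add_comm] using h

/-- A C¹, `b`-periodic bump localized near `c` (modulo `b`). -/
lemma periodic_bump (b ρ c : ℝ) (hb : 0 < b) (hρ : 0 < ρ) (hρb : ρ ≤ b / 2) :
    ∃ φ : ℝ → ℝ, ContDiff ℝ 1 φ ∧ Function.Periodic φ b ∧ (∀ t, 0 ≤ φ t) ∧
      (∀ t, |t - c| < ρ → 0 < φ t) ∧
      (∀ t, |t - c| ≤ b / 2 → φ t ≠ 0 → |t - c| < ρ) := by
  set A := Real.cos (2 * π * ρ / b) with hA
  have hπ : (0:ℝ) < π := Real.pi_pos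
  have hθρ_pos : 0 < 2 * π * ρ / b := by positivity
  have hθρ_le : 2 * π * ρ / b ≤ π := by
    rw [div_le_iff₀ hb]
    nlinarith
  have hA1 : A < 1 := by
    have := Real.cos_lt_cos_of_nonneg_of_le_pi le_rfl hθρ_le hθρ_pos
    simpa [hA] using this
  have hden : 0 < 1 - A := by linarith
  set φ : ℝ → ℝ := fun t =>
    Real.smoothTransition ((Real.cos (2 * π * (t - c) / b) - A) / (1 - A)) with hφ
  have key_abs : ∀ t : ℝ, |t - c| ≤ b / 2 → |2 * π * (t - c) / b| ≤ π := by
    intro t ht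
    rw [abs_div, abs_of_pos hb, div_le_iff₀ hb]
    calc |2 * π * (t - c)| = 2 * π * |t - c| := by
          rw [abs_mul, abs_of_pos (by positivity : (0:ℝ) < 2 * π)]
      _ ≤ 2 * π * (b / 2) := by nlinarith [abs_nonneg (t - c)]
      _ = π * b := by ring
  refine ⟨φ, ?_, ?_, fun t => Real.smoothTransition.nonneg _, ?_, ?_⟩
  · -- ContDiff
    apply Real.smoothTransition.contDiff.comp
    apply ContDiff.div_const
    apply ContDiff.sub _ contDiff_const
    exact Real.contDiff_cos.comp
      ((contDiff_const.mul (contDiff_id.sub contDiff_const)).div_const b)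
  · -- Periodic
    intro t
    have harg : 2 * π * (t + b - c) / b = 2 * π * (t - c) / b + 2 * π := by
      field_simp
      ring
    simp only [hφ, harg, Real.cos_add_two_pi]
  · -- positive near c
    intro t ht
    apply Real.smoothTransition.pos_of_pos
    apply div_pos _ hden
    have h1 : |2 * π * (t - c) / b| < 2 * π * ρ / b := by
      rw [abs_div, abs_of_pos hb, div_lt_div_iff₀ hb hb]
      have : |2 * π * (t - c)| = 2 * π * |t - c| := by
        rw [abs_mul, abs_of_pos (by positivity : (0:ℝ) < 2 * π)]
      rw [this]
      nlinarith [mul_lt_mul_of_pos_left ht (show (0:ℝ) < 2 * π * b by positivity)]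
    have h2 : Real.cos (2 * π * ρ / b) < Real.cos (2 * π * (t - c) / b) := by
      rw [← Real.cos_abs (2 * π * (t - c) / b)]
      exact Real.cos_lt_cos_of_nonneg_of_le_pi (abs_nonneg _) hθρ_le h1
    simpa [hA] using sub_pos.mpr h2
  · -- support
    intro t ht hne
    by_contra hcon
    push_neg at hcon
    have harg_le : |2 * π * (t - c) / b| ≤ π := key_abs t ht
    have hmono : Real.cos |2 * π * (t - c) / b| ≤ A := by
      rw [hA]
      apply Real.cos_le_cos_of_nonneg_of_le_pi hθρ_pos.le harg_le
      rw [abs_div, abs_of_pos hb, div_le_div_iff₀ hb hb]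
      have : |2 * π * (t - c)| = 2 * π * |t - c| := by
        rw [abs_mul, abs_of_pos (by positivity : (0:ℝ) < 2 * π)]
      rw [this]
      nlinarith [mul_le_mul_of_nonneg_left hcon (show (0:ℝ) ≤ 2 * π * b by positivity)]
    have : Real.cos (2 * π * (t - c) / b) - A ≤ 0 := by
      rw [← Real.cos_abs (2 * π * (t - c) / b)] ; linarith
    exact hne (Real.smoothTransition.zero_of_nonpos (div_nonpos_of_nonpos_of_nonneg this hden.le))

lemma integral_pos_of_nonneg_of_pos_on {f : ℝ → ℝ} {A B a b : ℝ}
    (hAa : A ≤ a) (hab : a < b) (hbB : b ≤ B) (hcont : Continuous f)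
    (h0 : ∀ x ∈ Icc A B, 0 ≤ f x) (hpos : ∀ x ∈ Ioo a b, 0 < f x) :
    0 < ∫ x in A..B, f x := by
  have hint : ∀ (u v : ℝ), IntervalIntegrable f volume u v := fun u v =>
    hcont.intervalIntegrable u v
  have h1 : (∫ x in A..B, f x)
      = (∫ x in A..a, f x) + (∫ x in a..b, f x) + (∫ x in b..B, f x) := by
    rw [intervalIntegral.integral_add_adjacent_intervals (hint A a) (hint a b),
      intervalIntegral.integral_add_adjacent_intervals (hint A b) (hint b B)]
  have h2 : 0 ≤ ∫ x in A..a, f x :=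
    intervalIntegral.integral_nonneg hAa fun x hx =>
      h0 x ⟨hx.1, hx.2.trans (hab.le.trans hbB)⟩
  have h3 : 0 < ∫ x in a..b, f x :=
    intervalIntegral.intervalIntegral_pos_of_pos_on (hint a b) hpos hab
  have h4 : 0 ≤ ∫ x in b..B, f x :=
    intervalIntegral.integral_nonneg hbB fun x hx =>
      h0 x ⟨(hAa.trans hab.le).trans hx.1, hx.2⟩
  linarith [h1, h2, h3, h4]


lemma fundamental {d : ℕ} {b₀ b₁ : ℝ} (hb₀ : 0 < b₀) (hb₁ : 0 < b₁)
    (W : ℝ → ℝ → ((Fin d → ℝ) →L[ℝ] ℝ))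
    (hWc : ∀ v, Continuous fun p : ℝ × ℝ => W p.1 p.2 v)
    (hWt : ∀ t x, W (t + b₀) x = W t x) (hWx : ∀ t x, W t (x + b₁) = W t x)
    (hzero : ∀ δ : ℝ → ℝ → (Fin d → ℝ),
      ContDiff ℝ 1 (fun p : ℝ × ℝ => δ p.1 p.2) →
      (∀ t x, δ (t + b₀) x = δ t x) → (∀ t x, δ t (x + b₁) = δ t x) →
      (∫ t in (0:ℝ)..b₀, ∫ x in (0:ℝ)..b₁, W t x (δ t x)) = 0)
    (t₀ x₀ : ℝ) : W t₀ x₀ = 0 := by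
  suffices aux : ∀ v : Fin d → ℝ, ¬ (0 < W t₀ x₀ v) by
    ext v
    rcases lt_trichotomy (W t₀ x₀ v) 0 with h | h | h
    · exact absurd (by simpa using (neg_pos.mpr h)) (by simpa using aux (-v))
    · simpa using h
    · exact absurd h (aux v)
  intro v hv
  set g : ℝ × ℝ → ℝ := fun p => W p.1 p.2 v with hgdef
  have hg : Continuous g := hWc v
  have hU : IsOpen (g ⁻¹' Ioi 0) := isOpen_Ioi.preimage hg
  obtain ⟨r, hr0, hr⟩ := Metric.isOpen_iff.mp hU (t₀, x₀) hv
  set ρ := min (r / 2) (min (b₀ / 2) (b₁ / 2)) with hρdef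
  have hρ0 : 0 < ρ := lt_min (by linarith) (lt_min (by linarith) (by linarith))
  have hρb₀ : ρ ≤ b₀ / 2 := le_trans (min_le_right _ _) (min_le_left _ _)
  have hρb₁ : ρ ≤ b₁ / 2 := le_trans (min_le_right _ _) (min_le_right _ _)
  have hρr : ρ < r := lt_of_le_of_lt (min_le_left _ _) (by linarith)
  have keyg : ∀ t x : ℝ, |t - t₀| < ρ → |x - x₀| < ρ → 0 < g (t, x) := by
    intro t x ht hx
    have : ((t, x) : ℝ × ℝ) ∈ ball (t₀, x₀) r := by
      rw [mem_ball, Prod.dist_eq]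
      exact max_lt (lt_of_lt_of_le (lt_of_eq_of_lt (Real.dist_eq t t₀) (lt_of_lt_of_le ht hρr.le)) le_rfl)
        (lt_of_le_of_lt (le_of_eq (Real.dist_eq x x₀)) (lt_of_lt_of_le hx hρr.le))
    exact hr this
  obtain ⟨φ, hφC, hφper, hφ0, hφpos, hφsupp⟩ := periodic_bump b₀ ρ t₀ hb₀ hρ0 hρb₀
  obtain ⟨ψ, hψC, hψper, hψ0, hψpos, hψsupp⟩ := periodic_bump b₁ ρ x₀ hb₁ hρ0 hρb₁
  set δ : ℝ → ℝ → (Fin d → ℝ) := fun t x => (φ t * ψ x) • v with hδdef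
  have hδC : ContDiff ℝ 1 (fun p : ℝ × ℝ => δ p.1 p.2) :=
    ((hφC.comp contDiff_fst).mul (hψC.comp contDiff_snd)).smul contDiff_const
  have hiz := hzero δ hδC (fun t x => by simp [hδdef, hφper t])
    (fun t x => by simp [hδdef, hψper x])
  set H : ℝ × ℝ → ℝ := fun p => φ p.1 * ψ p.2 * g p with hHdef
  have hHc : Continuous H :=
    (((hφC.continuous.comp continuous_fst).mul
      (hψC.continuous.comp continuous_snd)).mul hg)
  have hWH : ∀ t x : ℝ, W t x (δ t x) = H (t, x) := by
    intro t x
    simp [hδdef, hHdef, hgdef, _root_.map_smul, smul_eq_mul]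
  -- nonnegativity of H on the window
  have hHnn : ∀ t x : ℝ, |t - t₀| ≤ b₀ / 2 → |x - x₀| ≤ b₁ / 2 → 0 ≤ H (t, x) := by
    intro t x ht hx
    by_cases hφz : φ t = 0
    · simp [hHdef, hφz]
    by_cases hψz : ψ x = 0
    · simp [hHdef, hψz]
    exact le_of_lt (mul_pos (mul_pos ((hφ0 t).lt_of_ne (Ne.symm hφz))
      ((hψ0 x).lt_of_ne (Ne.symm hψz)))
      (keyg t x (hφsupp t ht hφz) (hψsupp x hx hψz)))
  -- inner shift
  set J : ℝ → ℝ := fun t => ∫ x in (x₀ - b₁ / 2)..(x₀ + b₁ / 2), H (t, x) with hJdef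
  have inner_shift : ∀ t : ℝ, (∫ x in (0:ℝ)..b₁, H (t, x)) = J t := by
    intro t
    have hper : Function.Periodic (fun x => H (t, x)) b₁ := by
      intro x
      simp only [hHdef, hgdef, hψper x, hWx]
    have h := hper.intervalIntegral_add_eq 0 (x₀ - b₁ / 2)
    have e2 : x₀ - b₁ / 2 + b₁ = x₀ + b₁ / 2 := by ring
    rw [zero_add, e2] at h
    exact h
  -- outer shift
  have hKper : Function.Periodic (fun t => ∫ x in (0:ℝ)..b₁, H (t, x)) b₀ := by
    intro t
    show (∫ x in (0:ℝ)..b₁, H (t + b₀, x)) = ∫ x in (0:ℝ)..b₁, H (t, x)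
    exact intervalIntegral.integral_congr fun x _ => by
      simp only [hHdef, hgdef, hφper t, hWt]
  have outer : (∫ t in (0:ℝ)..b₀, ∫ x in (0:ℝ)..b₁, H (t, x))
      = ∫ t in (t₀ - b₀ / 2)..(t₀ + b₀ / 2), J t := by
    have h := hKper.intervalIntegral_add_eq 0 (t₀ - b₀ / 2)
    have e2 : t₀ - b₀ / 2 + b₀ = t₀ + b₀ / 2 := by ring
    rw [zero_add, e2] at h
    rw [h]
    exact intervalIntegral.integral_congr fun t _ => inner_shift t
  have hJcont : Continuous J := by
    apply intervalIntegral.continuous_parametric_intervalIntegral_of_continuous'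
      (f := fun t x => H (t, x))
    exact hHc
  have hJpos : 0 < ∫ t in (t₀ - b₀ / 2)..(t₀ + b₀ / 2), J t := by
    apply integral_pos_of_nonneg_of_pos_on (a := t₀ - ρ) (b := t₀ + ρ)
      (by linarith) (by linarith) (by linarith) hJcont
    · -- nonneg on Icc
      intro t ht
      have ht' : |t - t₀| ≤ b₀ / 2 := by
        rw [abs_sub_le_iff]; constructor <;> [linarith [ht.2]; linarith [ht.1]]
      apply intervalIntegral.integral_nonneg (by linarith)
      intro x hx
      have hx' : |x - x₀| ≤ b₁ / 2 := by
        rw [abs_sub_le_iff]; constructor <;> [linarith [hx.2]; linarith [hx.1]]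
      exact hHnn t x ht' hx'
    · -- positive on Ioo
      intro t ht
      have ht' : |t - t₀| < ρ := by
        rw [abs_sub_lt_iff]; constructor <;> [linarith [ht.2]; linarith [ht.1]]
      have htw : |t - t₀| ≤ b₀ / 2 := le_trans ht'.le hρb₀
      apply integral_pos_of_nonneg_of_pos_on (a := x₀ - ρ) (b := x₀ + ρ)
        (by linarith) (by linarith) (by linarith)
        (hHc.comp (Continuous.prodMk_right t))
      · intro x hx
        have hx' : |x - x₀| ≤ b₁ / 2 := by
          rw [abs_sub_le_iff]; constructor <;> [linarith [hx.2]; linarith [hx.1]]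
        exact hHnn t x htw hx'
      · intro x hx
        have hx' : |x - x₀| < ρ := by
          rw [abs_sub_lt_iff]; constructor <;> [linarith [hx.2]; linarith [hx.1]]
        exact mul_pos (mul_pos (hφpos t ht') (hψpos x hx')) (keyg t x ht' hx')
  rw [show (∫ t in (0:ℝ)..b₀, ∫ x in (0:ℝ)..b₁, W t x (δ t x))
      = ∫ t in (0:ℝ)..b₀, ∫ x in (0:ℝ)..b₁, H (t, x) from
    intervalIntegral.integral_congr fun t _ =>
      intervalIntegral.integral_congr fun x _ => hWH t x, outer] at hiz
  exact absurd hiz (ne_of_gt hJpos)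


/-- The key integral identity: splitting the variation integrand and shifting
the integration variables using periodicity. -/
lemma variation_shift (b₀ b₁ Δt Δx : ℝ) (hb₀ : 0 < b₀) (hb₁ : 0 < b₁)
    (Ld : (Fin d → ℝ) → (Fin d → ℝ) → (Fin d → ℝ) → ℝ)
    (hLd : ContDiff ℝ 1
      (fun q : (Fin d → ℝ) × (Fin d → ℝ) × (Fin d → ℝ) => Ld q.1 q.2.1 q.2.2))
    (u δ : ℝ → ℝ → (Fin d → ℝ))
    (hu : ContDiff ℝ 1 (fun p : ℝ × ℝ => u p.1 p.2))
    (huper_t : ∀ t x, u (t + b₀) x = u t x)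
    (huper_x : ∀ t x, u t (x + b₁) = u t x)
    (hδ : ContDiff ℝ 1 (fun p : ℝ × ℝ => δ p.1 p.2))
    (hδt : ∀ t x, δ (t + b₀) x = δ t x)
    (hδx : ∀ t x, δ t (x + b₁) = δ t x) :
    (∫ t in (0:ℝ)..b₀, ∫ x in (0:ℝ)..b₁,
        (fderiv ℝ (fun q : (Fin d → ℝ) × (Fin d → ℝ) × (Fin d → ℝ) => Ld q.1 q.2.1 q.2.2)
            (u t x, u (t + Δt) x, u t (x + Δx)))
          (δ t x, δ (t + Δt) x, δ t (x + Δx)))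
      = ∫ t in (0:ℝ)..b₀, ∫ x in (0:ℝ)..b₁,
          (fderiv ℝ (fun a => Ld a (u (t + Δt) x) (u t (x + Δx))) (u t x)
            + fderiv ℝ (fun a => Ld (u (t - Δt) x) a (u (t - Δt) (x + Δx))) (u t x)
            + fderiv ℝ (fun a => Ld (u t (x - Δx)) (u (t + Δt) (x - Δx)) a) (u t x))
          (δ t x) := by
  set L := fun q : (Fin d → ℝ) × (Fin d → ℝ) × (Fin d → ℝ) => Ld q.1 q.2.1 q.2.2 with hLdef
  set DL := fderiv ℝ L with hDLdef
  have hDL : Continuous DL := hLd.continuous_fderiv one_ne_zero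
  have hucont : Continuous fun p : ℝ × ℝ => u p.1 p.2 := hu.continuous
  have hδcont : Continuous fun p : ℝ × ℝ => δ p.1 p.2 := hδ.continuous
  set P : ℝ × ℝ → (Fin d → ℝ) × (Fin d → ℝ) × (Fin d → ℝ) :=
    fun p => (u p.1 p.2, u (p.1 + Δt) p.2, u p.1 (p.2 + Δx)) with hPdef
  have shiftc : ∀ c : ℝ, Continuous fun p : ℝ × ℝ => ((p.1 + c, p.2) : ℝ × ℝ) := fun c =>
    (continuous_fst.add continuous_const).prodMk continuous_snd
  have shiftc' : ∀ c : ℝ, Continuous fun p : ℝ × ℝ => ((p.1, p.2 + c) : ℝ × ℝ) := fun c =>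
    continuous_fst.prodMk (continuous_snd.add continuous_const)
  have hP : Continuous P :=
    hucont.prodMk ((hucont.comp (shiftc Δt)).prodMk (hucont.comp (shiftc' Δx)))
  -- periodicity of P
  have hPper_t : ∀ s x : ℝ, P (s + b₀, x) = P (s, x) := by
    intro s x
    have e : s + b₀ + Δt = s + Δt + b₀ := by ring
    simp only [hPdef, e, huper_t]
  have hPper_x : ∀ s x : ℝ, P (s, x + b₁) = P (s, x) := by
    intro s x
    have e : x + b₁ + Δx = x + Δx + b₁ := by ring
    simp only [hPdef, e, huper_x]
  -- the three pieces
  set G₁ : ℝ × ℝ → ℝ := fun p => DL (P p) (ι₁ (δ p.1 p.2)) with hG₁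
  set G₂ : ℝ × ℝ → ℝ := fun p => DL (P p) (ι₂ (δ (p.1 + Δt) p.2)) with hG₂
  set G₃ : ℝ × ℝ → ℝ := fun p => DL (P p) (ι₃ (δ p.1 (p.2 + Δx))) with hG₃
  set G₂' : ℝ × ℝ → ℝ := fun p => DL (P (p.1 - Δt, p.2)) (ι₂ (δ p.1 p.2)) with hG₂'
  set G₃' : ℝ × ℝ → ℝ := fun p => DL (P (p.1, p.2 - Δx)) (ι₃ (δ p.1 p.2)) with hG₃'
  have hG₁c : Continuous G₁ :=
    (hDL.comp hP).clm_apply (ι₁.continuous.comp hδcont)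
  have hG₂c : Continuous G₂ :=
    (hDL.comp hP).clm_apply (ι₂.continuous.comp (hδcont.comp (shiftc Δt)))
  have hG₃c : Continuous G₃ :=
    (hDL.comp hP).clm_apply (ι₃.continuous.comp (hδcont.comp (shiftc' Δx)))
  have hG₂'c : Continuous G₂' :=
    (hDL.comp (hP.comp ((continuous_fst.sub continuous_const).prodMk continuous_snd))).clm_apply
      (ι₂.continuous.comp hδcont)
  have hG₃'c : Continuous G₃' :=
    (hDL.comp (hP.comp (continuous_fst.prodMk (continuous_snd.sub continuous_const)))).clm_apply
      (ι₃.continuous.comp hδcont)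
  -- Step A : split the LHS
  have hsplit : (∫ t in (0:ℝ)..b₀, ∫ x in (0:ℝ)..b₁,
        DL (P (t, x)) (δ t x, δ (t + Δt) x, δ t (x + Δx)))
      = (∫ t in (0:ℝ)..b₀, ∫ x in (0:ℝ)..b₁, G₁ (t, x))
        + (∫ t in (0:ℝ)..b₀, ∫ x in (0:ℝ)..b₁, G₂ (t, x))
        + (∫ t in (0:ℝ)..b₀, ∫ x in (0:ℝ)..b₁, G₃ (t, x)) := by
    have hpt : ∀ p : ℝ × ℝ,
        DL (P p) (δ p.1 p.2, δ (p.1 + Δt) p.2, δ p.1 (p.2 + Δx)) = G₁ p + G₂ p + G₃ p := by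
      intro p
      conv_lhs => rw [show ((δ p.1 p.2, δ (p.1 + Δt) p.2, δ p.1 (p.2 + Δx))
        : (Fin d → ℝ) × (Fin d → ℝ) × (Fin d → ℝ))
        = ι₁ (δ p.1 p.2) + ι₂ (δ (p.1 + Δt) p.2) + ι₃ (δ p.1 (p.2 + Δx)) from
          (iota_decomp _).symm]
      simp [map_add]
      rfl
    have hGc : Continuous fun p : ℝ × ℝ => G₁ p + G₂ p + G₃ p :=
      (hG₁c.add hG₂c).add hG₃c
    calc (∫ t in (0:ℝ)..b₀, ∫ x in (0:ℝ)..b₁,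
          DL (P (t, x)) (δ t x, δ (t + Δt) x, δ t (x + Δx)))
        = ∫ t in (0:ℝ)..b₀, ∫ x in (0:ℝ)..b₁, (G₁ (t, x) + G₂ (t, x) + G₃ (t, x)) :=
          intervalIntegral.integral_congr fun t _ =>
            intervalIntegral.integral_congr fun x _ => hpt (t, x)
      _ = ∫ p in Ioc (0:ℝ) b₀ ×ˢ Ioc (0:ℝ) b₁, (G₁ p + G₂ p + G₃ p) :=
          double_to_set hb₀.le hb₁.le hGc
      _ = (∫ p in Ioc (0:ℝ) b₀ ×ˢ Ioc (0:ℝ) b₁, G₁ p)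
            + (∫ p in Ioc (0:ℝ) b₀ ×ˢ Ioc (0:ℝ) b₁, G₂ p)
            + (∫ p in Ioc (0:ℝ) b₀ ×ˢ Ioc (0:ℝ) b₁, G₃ p) := by
          have i12 : IntegrableOn (fun p => G₁ p + G₂ p)
              (Ioc (0:ℝ) b₀ ×ˢ Ioc (0:ℝ) b₁) :=
            (integrableOn_box hG₁c).add (integrableOn_box hG₂c)
          rw [integral_add i12 (integrableOn_box hG₃c),
            integral_add (integrableOn_box hG₁c) (integrableOn_box hG₂c)]
      _ = (∫ t in (0:ℝ)..b₀, ∫ x in (0:ℝ)..b₁, G₁ (t, x))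
            + (∫ t in (0:ℝ)..b₀, ∫ x in (0:ℝ)..b₁, G₂ (t, x))
            + (∫ t in (0:ℝ)..b₀, ∫ x in (0:ℝ)..b₁, G₃ (t, x)) := by
          rw [double_to_set hb₀.le hb₁.le hG₁c, double_to_set hb₀.le hb₁.le hG₂c,
            double_to_set hb₀.le hb₁.le hG₃c]
  -- Step B : shift G₂
  have hB : (∫ t in (0:ℝ)..b₀, ∫ x in (0:ℝ)..b₁, G₂ (t, x))
      = ∫ t in (0:ℝ)..b₀, ∫ x in (0:ℝ)..b₁, G₂' (t, x) := by
    set K : ℝ → ℝ := fun t => ∫ x in (0:ℝ)..b₁, G₂' (t, x) with hKdef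
    have hKper : Function.Periodic K b₀ := by
      intro t
      show (∫ x in (0:ℝ)..b₁, G₂' (t + b₀, x)) = ∫ x in (0:ℝ)..b₁, G₂' (t, x)
      refine intervalIntegral.integral_congr fun x _ => ?_
      have e : t + b₀ - Δt = (t - Δt) + b₀ := by ring
      simp only [hG₂', e, hPper_t, hδt]
    have hout : ∀ t : ℝ, (∫ x in (0:ℝ)..b₁, G₂ (t, x)) = K (t + Δt) := by
      intro t
      refine intervalIntegral.integral_congr fun x _ => ?_
      have e : t + Δt - Δt = t := by ring
      simp only [hG₂, hG₂', e]
    rw [intervalIntegral.integral_congr (fun t _ => hout t), shift_outer hKper]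
  -- Step C : shift G₃
  have hC : (∫ t in (0:ℝ)..b₀, ∫ x in (0:ℝ)..b₁, G₃ (t, x))
      = ∫ t in (0:ℝ)..b₀, ∫ x in (0:ℝ)..b₁, G₃' (t, x) := by
    refine intervalIntegral.integral_congr fun t _ => ?_
    set k : ℝ → ℝ := fun x => G₃' (t, x) with hkdef
    have hkper : Function.Periodic k b₁ := by
      intro x
      show G₃' (t, x + b₁) = G₃' (t, x)
      have e : x + b₁ - Δx = (x - Δx) + b₁ := by ring
      simp only [hG₃', e, hPper_x, hδx]
    have hin : ∀ x : ℝ, G₃ (t, x) = k (x + Δx) := by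
      intro x
      have e : x + Δx - Δx = x := by ring
      simp only [hG₃, hG₃', hkdef, e]
    rw [intervalIntegral.integral_congr (fun x _ => hin x), shift_outer hkper]
  -- Step D : recombine
  have hrecomb : (∫ t in (0:ℝ)..b₀, ∫ x in (0:ℝ)..b₁, G₁ (t, x))
        + (∫ t in (0:ℝ)..b₀, ∫ x in (0:ℝ)..b₁, G₂' (t, x))
        + (∫ t in (0:ℝ)..b₀, ∫ x in (0:ℝ)..b₁, G₃' (t, x))
      = ∫ t in (0:ℝ)..b₀, ∫ x in (0:ℝ)..b₁, (G₁ (t, x) + G₂' (t, x) + G₃' (t, x)) := by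
    have i12 : IntegrableOn (fun p => G₁ p + G₂' p) (Ioc (0:ℝ) b₀ ×ˢ Ioc (0:ℝ) b₁) :=
      (integrableOn_box hG₁c).add (integrableOn_box hG₂'c)
    have h2 : (∫ t in (0:ℝ)..b₀, ∫ x in (0:ℝ)..b₁, (G₁ (t, x) + G₂' (t, x) + G₃' (t, x)))
        = ∫ p in Ioc (0:ℝ) b₀ ×ˢ Ioc (0:ℝ) b₁, (G₁ p + G₂' p + G₃' p) :=
      double_to_set hb₀.le hb₁.le ((hG₁c.add hG₂'c).add hG₃'c)
    rw [h2, integral_add i12 (integrableOn_box hG₃'c),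
      integral_add (integrableOn_box hG₁c) (integrableOn_box hG₂'c),
      double_to_set hb₀.le hb₁.le hG₁c, double_to_set hb₀.le hb₁.le hG₂'c,
      double_to_set hb₀.le hb₁.le hG₃'c]
  -- identify with the Euler–Lagrange form
  have hEL : ∀ t x : ℝ, G₁ (t, x) + G₂' (t, x) + G₃' (t, x)
      = (fderiv ℝ (fun a => Ld a (u (t + Δt) x) (u t (x + Δx))) (u t x)
          + fderiv ℝ (fun a => Ld (u (t - Δt) x) a (u (t - Δt) (x + Δx))) (u t x)
          + fderiv ℝ (fun a => Ld (u t (x - Δx)) (u (t + Δt) (x - Δx)) a) (u t x))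
        (δ t x) := by
    intro t x
    have e1 : fderiv ℝ (fun a => Ld a (u (t + Δt) x) (u t (x + Δx))) (u t x)
        = (DL (P (t, x))).comp ι₁ :=
      (hasFDerivAt_partial1 hLd _ _ _).fderiv
    have e2 : fderiv ℝ (fun a => Ld (u (t - Δt) x) a (u (t - Δt) (x + Δx))) (u t x)
        = (DL (P (t - Δt, x))).comp ι₂ := by
      have h := (hasFDerivAt_partial2 hLd (u (t - Δt) x) (u t x) (u (t - Δt) (x + Δx))).fderiv
      rw [h]
      have e : t - Δt + Δt = t := by ring
      simp only [hPdef, e]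
      rfl
    have e3 : fderiv ℝ (fun a => Ld (u t (x - Δx)) (u (t + Δt) (x - Δx)) a) (u t x)
        = (DL (P (t, x - Δx))).comp ι₃ := by
      have h := (hasFDerivAt_partial3 hLd (u t (x - Δx)) (u (t + Δt) (x - Δx)) (u t x)).fderiv
      rw [h]
      have e : x - Δx + Δx = x := by ring
      simp only [hPdef, e]
      rfl
    simp only [hG₁, hG₂', hG₃', e1, e2, e3, ContinuousLinearMap.add_apply,
      ContinuousLinearMap.comp_apply]
  calc (∫ t in (0:ℝ)..b₀, ∫ x in (0:ℝ)..b₁,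
        (fderiv ℝ L (u t x, u (t + Δt) x, u t (x + Δx)))
          (δ t x, δ (t + Δt) x, δ t (x + Δx)))
      = (∫ t in (0:ℝ)..b₀, ∫ x in (0:ℝ)..b₁, G₁ (t, x))
        + (∫ t in (0:ℝ)..b₀, ∫ x in (0:ℝ)..b₁, G₂ (t, x))
        + (∫ t in (0:ℝ)..b₀, ∫ x in (0:ℝ)..b₁, G₃ (t, x)) := hsplit
    _ = (∫ t in (0:ℝ)..b₀, ∫ x in (0:ℝ)..b₁, G₁ (t, x))
        + (∫ t in (0:ℝ)..b₀, ∫ x in (0:ℝ)..b₁, G₂' (t, x))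
        + (∫ t in (0:ℝ)..b₀, ∫ x in (0:ℝ)..b₁, G₃' (t, x)) := by rw [hB, hC]
    _ = ∫ t in (0:ℝ)..b₀, ∫ x in (0:ℝ)..b₁, (G₁ (t, x) + G₂' (t, x) + G₃' (t, x)) := hrecomb
    _ = _ := intervalIntegral.integral_congr fun t _ =>
          intervalIntegral.integral_congr fun x _ => hEL t x



/-- Representation of the Euler–Lagrange expression via the full differential. -/
lemma EL_repr (Δt Δx : ℝ)
    (Ld : (Fin d → ℝ) → (Fin d → ℝ) → (Fin d → ℝ) → ℝ)
    (hLd : ContDiff ℝ 1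
      (fun q : (Fin d → ℝ) × (Fin d → ℝ) × (Fin d → ℝ) => Ld q.1 q.2.1 q.2.2))
    (u : ℝ → ℝ → (Fin d → ℝ)) (t x : ℝ) :
    (fderiv ℝ (fun a => Ld a (u (t + Δt) x) (u t (x + Δx))) (u t x)
      + fderiv ℝ (fun a => Ld (u (t - Δt) x) a (u (t - Δt) (x + Δx))) (u t x)
      + fderiv ℝ (fun a => Ld (u t (x - Δx)) (u (t + Δt) (x - Δx)) a) (u t x))
    = (fderiv ℝ (fun q : (Fin d → ℝ) × (Fin d → ℝ) × (Fin d → ℝ) => Ld q.1 q.2.1 q.2.2)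
          (u t x, u (t + Δt) x, u t (x + Δx))).comp ι₁
      + (fderiv ℝ (fun q : (Fin d → ℝ) × (Fin d → ℝ) × (Fin d → ℝ) => Ld q.1 q.2.1 q.2.2)
          (u (t - Δt) x, u t x, u (t - Δt) (x + Δx))).comp ι₂
      + (fderiv ℝ (fun q : (Fin d → ℝ) × (Fin d → ℝ) × (Fin d → ℝ) => Ld q.1 q.2.1 q.2.2)
          (u t (x - Δx), u (t + Δt) (x - Δx), u t x)).comp ι₃ := by
  rw [(hasFDerivAt_partial1 hLd (u t x) (u (t + Δt) x) (u t (x + Δx))).fderiv,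
    (hasFDerivAt_partial2 hLd (u (t - Δt) x) (u t x) (u (t - Δt) (x + Δx))).fderiv,
    (hasFDerivAt_partial3 hLd (u t (x - Δx)) (u (t + Δt) (x - Δx)) (u t x)).fderiv]

end DELaux

open DELaux in
/-- A C¹ field on the torus is a stationary point of the continuum action of an
autonomous C¹ 3-point discrete Lagrangian with respect to (periodic C¹) variations
iff it satisfies the functional discrete Euler–Lagrange equation. -/
theorem functional_discrete_EL
    {d : ℕ} (b₀ b₁ Δt Δx : ℝ) (hb₀ : 0 < b₀) (hb₁ : 0 < b₁)
    (hΔt : 0 < Δt) (hΔx : 0 < Δx)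
    (Ld : (Fin d → ℝ) → (Fin d → ℝ) → (Fin d → ℝ) → ℝ)
    (hLd : ContDiff ℝ 1
      (fun q : (Fin d → ℝ) × (Fin d → ℝ) × (Fin d → ℝ) => Ld q.1 q.2.1 q.2.2))
    (u : ℝ → ℝ → (Fin d → ℝ))
    (hu : ContDiff ℝ 1 (fun p : ℝ × ℝ => u p.1 p.2))
    (huper_t : ∀ t x, u (t + b₀) x = u t x)
    (huper_x : ∀ t x, u t (x + b₁) = u t x) :
    (∀ δ : ℝ → ℝ → (Fin d → ℝ),
      ContDiff ℝ 1 (fun p : ℝ × ℝ => δ p.1 p.2) →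
      (∀ t x, δ (t + b₀) x = δ t x) →
      (∀ t x, δ t (x + b₁) = δ t x) →
      deriv (fun ε : ℝ =>
        SactD Ld b₀ b₁ Δt Δx (fun t x => u t x + ε • δ t x)) 0 = 0)
    ↔
    (∀ t x : ℝ,
      fderiv ℝ (fun a => Ld a (u (t + Δt) x) (u t (x + Δx))) (u t x)
        + fderiv ℝ (fun a => Ld (u (t - Δt) x) a (u (t - Δt) (x + Δx))) (u t x)
        + fderiv ℝ (fun a => Ld (u t (x - Δx)) (u (t + Δt) (x - Δx)) a) (u t x)
        = 0) := by
  set W : ℝ → ℝ → ((Fin d → ℝ) →L[ℝ] ℝ) := fun t x =>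
    fderiv ℝ (fun a => Ld a (u (t + Δt) x) (u t (x + Δx))) (u t x)
      + fderiv ℝ (fun a => Ld (u (t - Δt) x) a (u (t - Δt) (x + Δx))) (u t x)
      + fderiv ℝ (fun a => Ld (u t (x - Δx)) (u (t + Δt) (x - Δx)) a) (u t x) with hWdef
  set DL := fderiv ℝ (fun q : (Fin d → ℝ) × (Fin d → ℝ) × (Fin d → ℝ) => Ld q.1 q.2.1 q.2.2)
    with hDLdef
  have hDL : Continuous DL := hLd.continuous_fderiv one_ne_zero
  have hucont : Continuous fun p : ℝ × ℝ => u p.1 p.2 := hu.continuous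
  -- the variation formula, for every admissible variation
  have hvar : ∀ δ : ℝ → ℝ → (Fin d → ℝ),
      ContDiff ℝ 1 (fun p : ℝ × ℝ => δ p.1 p.2) →
      (∀ t x, δ (t + b₀) x = δ t x) → (∀ t x, δ t (x + b₁) = δ t x) →
      deriv (fun ε : ℝ => SactD Ld b₀ b₁ Δt Δx (fun t x => u t x + ε • δ t x)) 0
        = ∫ t in (0:ℝ)..b₀, ∫ x in (0:ℝ)..b₁, W t x (δ t x) := by
    intro δ hδC hδt hδx
    rw [deriv_SactD b₀ b₁ Δt Δx hb₀ hb₁ Ld hLd u δ hu hδC,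
      variation_shift b₀ b₁ Δt Δx hb₀ hb₁ Ld hLd u δ hu huper_t huper_x hδC hδt hδx]
  constructor
  · -- stationarity implies EL
    intro hstat t x
    refine fundamental hb₀ hb₁ W ?_ ?_ ?_ ?_ t x
    · -- continuity
      intro v
      have hrepr : (fun p : ℝ × ℝ => W p.1 p.2 v)
          = fun p : ℝ × ℝ =>
              DL (u p.1 p.2, u (p.1 + Δt) p.2, u p.1 (p.2 + Δx)) (ι₁ v)
              + DL (u (p.1 - Δt) p.2, u p.1 p.2, u (p.1 - Δt) (p.2 + Δx)) (ι₂ v)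
              + DL (u p.1 (p.2 - Δx), u (p.1 + Δt) (p.2 - Δx), u p.1 p.2) (ι₃ v) := by
        funext p
        simp only [hWdef]
        rw [EL_repr Δt Δx Ld hLd u p.1 p.2]
        simp [ContinuousLinearMap.add_apply, ContinuousLinearMap.comp_apply, hDLdef]
      rw [hrepr]
      have m1 : Continuous fun p : ℝ × ℝ =>
          ((u p.1 p.2, u (p.1 + Δt) p.2, u p.1 (p.2 + Δx)) :
            (Fin d → ℝ) × (Fin d → ℝ) × (Fin d → ℝ)) :=
        hucont.prodMk
          ((hucont.comp ((continuous_fst.add continuous_const).prodMk continuous_snd)).prodMk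
            (hucont.comp (continuous_fst.prodMk (continuous_snd.add continuous_const))))
      have m2 : Continuous fun p : ℝ × ℝ =>
          ((u (p.1 - Δt) p.2, u p.1 p.2, u (p.1 - Δt) (p.2 + Δx)) :
            (Fin d → ℝ) × (Fin d → ℝ) × (Fin d → ℝ)) :=
        (hucont.comp ((continuous_fst.sub continuous_const).prodMk continuous_snd)).prodMk
          (hucont.prodMk (hucont.comp ((continuous_fst.sub continuous_const).prodMk
            (continuous_snd.add continuous_const))))
      have m3 : Continuous fun p : ℝ × ℝ =>
          ((u p.1 (p.2 - Δx), u (p.1 + Δt) (p.2 - Δx), u p.1 p.2) :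
            (Fin d → ℝ) × (Fin d → ℝ) × (Fin d → ℝ)) :=
        (hucont.comp (continuous_fst.prodMk (continuous_snd.sub continuous_const))).prodMk
          ((hucont.comp ((continuous_fst.add continuous_const).prodMk
            (continuous_snd.sub continuous_const))).prodMk hucont)
      exact (((hDL.comp m1).clm_apply continuous_const).add
        ((hDL.comp m2).clm_apply continuous_const)).add
        ((hDL.comp m3).clm_apply continuous_const)
    · -- periodicity in t
      intro t x
      simp only [hWdef]
      have a1 : t + b₀ + Δt = t + Δt + b₀ := by ring
      have a2 : t + b₀ - Δt = t - Δt + b₀ := by ring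
      simp only [a1, a2, huper_t]
    · -- periodicity in x
      intro t x
      simp only [hWdef]
      have a1 : x + b₁ + Δx = x + Δx + b₁ := by ring
      have a2 : x + b₁ - Δx = x - Δx + b₁ := by ring
      simp only [a1, a2, huper_x]
    · -- the integral vanishes for all variations
      intro δ hδC hδt hδx
      rw [← hvar δ hδC hδt hδx]
      exact hstat δ hδC hδt hδx
  · -- EL implies stationarity
    intro hEL δ hδC hδt hδx
    rw [hvar δ hδC hδt hδx]
    have : ∀ t x : ℝ, W t x (δ t x) = 0 := by
      intro t x
      simp only [hWdef]
      rw [hEL t x]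
      simp
    rw [intervalIntegral.integral_congr (fun t _ =>
      intervalIntegral.integral_congr (fun x _ => this t x))]
    simp
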